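/- Let t ≥ 4 be an integer and let S = S(t, t−1, …, 2) be the spider whose legs have orders t, t−1, …, 2, so S has n = t(t+1)/2 vertices. Then th₊(S) = t + 1 = 1 + th₊(P_n); in particular S is a super-spider. -/

import Mathlib

open SimpleGraph

/-- `v` PSD-forces `w` given blue set `B`: `v` is blue, adjacent to the white vertex `w`,
and `w` is the only white neighbor of `v` in the component of `G - B` containing `w`. -/
def psdForces {V : Type*} (G : SimpleGraph V) (B : Set V) (v w : V) : Prop :=
  v ∈ B ∧ G.Adj v w ∧ ∃ hw : w ∉ B,
    ∀ (u : V) (hu : u ∉ B), G.Adj v u →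
      (G.induce {x | x ∉ B}).Reachable ⟨u, hu⟩ ⟨w, hw⟩ → u = w

/-- One time-step of PSD forcing: all forceable white vertices become blue simultaneously. -/
def psdStep {V : Type*} (G : SimpleGraph V) (B : Set V) : Set V :=
  B ∪ {w | ∃ v, psdForces G B v w}

/-- `B` is a PSD-forcing set of `G` if iterating the PSD color change rule colors all of `V`. -/
def IsPSDForcing {V : Type*} (G : SimpleGraph V) (B : Set V) : Prop :=
  ∃ t, (psdStep G)^[t] B = Set.univ

/-- The PSD-propagation time of `B` in `G`. -/
noncomputable def psdPt {V : Type*} (G : SimpleGraph V) (B : Set V) : ℕ :=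
  sInf {t | (psdStep G)^[t] B = Set.univ}

/-- The PSD-throttling number of `G`. -/
noncomputable def psdTh {V : Type*} (G : SimpleGraph V) : ℕ :=
  sInf {k | ∃ B : Finset V, IsPSDForcing G ↑B ∧ k = B.card + psdPt G ↑B}

/-- The weighted PSD-throttling number of `(G, w)`. -/
noncomputable def psdThW {V : Type*} (G : SimpleGraph V) (w : V → ℕ) : ℕ :=
  sInf {k | ∃ B : Finset V, IsPSDForcing G ↑B ∧ k = (∑ x ∈ B, w x) + psdPt G ↑B}

/-- The spider `S(l₀, …, l_{k-1})`: a center vertex `none` adjacent to the first vertex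
of each of `k` disjoint paths, the `i`-th of order `l i`. -/
def spider (k : ℕ) (l : Fin k → ℕ) : SimpleGraph (Option ((i : Fin k) × Fin (l i))) :=
  SimpleGraph.fromRel (fun x y =>
    (∃ (i : Fin k) (j : Fin (l i)), (j : ℕ) = 0 ∧ x = none ∧ y = some ⟨i, j⟩) ∨
    (∃ (i : Fin k) (j j' : Fin (l i)), (j' : ℕ) = (j : ℕ) + 1 ∧
      x = some ⟨i, j⟩ ∧ y = some ⟨i, j'⟩))

/-- The balanced spider `T_{α,β}` with `α` legs each of order `β`. -/
abbrev balancedSpider (α β : ℕ) : SimpleGraph (Option ((_ : Fin α) × Fin β)) :=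
  spider α (fun _ => β)



section General
variable {V : Type*} (G : SimpleGraph V)

/-- Separation property: distinct white neighbors of a blue vertex are never
reachable from each other in the white induced subgraph. -/
def SepProp : Prop :=
  ∀ (B : Set V) (v : V), v ∈ B → ∀ (u w : V) (hu : u ∉ B) (hw : w ∉ B),
    G.Adj v u → G.Adj v w →
    (G.induce {x | x ∉ B}).Reachable ⟨u, hu⟩ ⟨w, hw⟩ → u = w

lemma reach_const {s : Set V} (f : V → ℕ)
    (hf : ∀ x y, G.Adj x y → x ∈ s → y ∈ s → f x = f y)
    (a b : s) (h : (G.induce s).Reachable a b) : f a = f b := by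
  obtain ⟨p⟩ := h
  induction p with
  | nil => rfl
  | cons hadj p ih =>
    rename_i x y c
    have : G.Adj x.1 y.1 := hadj
    exact (hf x.1 y.1 this x.2 y.2).trans ih

lemma sepProp_of_lab
    (H : ∀ v : V, ∃ f : V → ℕ,
      (∀ x y, G.Adj x y → x ≠ v → y ≠ v → f x = f y) ∧
      (∀ u w, G.Adj v u → G.Adj v w → f u = f w → u = w)) :
    SepProp G := by
  intro B v hv u w hu hw hadju hadjw hreach
  obtain ⟨f, h1, h2⟩ := H v
  refine h2 u w hadju hadjw ?_
  refine reach_const G f ?_ _ _ hreach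
  intro x y hxy hx hy
  exact h1 x y hxy (fun h => hx (h ▸ hv)) (fun h => hy (h ▸ hv))

lemma psdStep_eq (hsep : SepProp G) (B : Set V) :
    psdStep G B = B ∪ {w | ∃ v ∈ B, G.Adj v w} := by
  ext w
  constructor
  · rintro (h | ⟨v, hv, hadj, -⟩)
    · exact Or.inl h
    · exact Or.inr ⟨v, hv, hadj⟩
  · rintro (h | ⟨v, hv, hadj⟩)
    · exact Or.inl h
    · by_cases hw : w ∈ B
      · exact Or.inl hw
      · exact Or.inr ⟨v, hv, hadj, hw, fun u hu hadju hr => hsep B v hv u w hu hw hadju hadj hr⟩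

lemma iterate_eq_ball (d : V → V → ℕ)
    (hd0 : ∀ x y, d x y = 0 ↔ x = y)
    (hlip : ∀ x y z, G.Adj x y → d z x ≤ d z y + 1)
    (hdesc : ∀ x z, 0 < d z x → ∃ y, G.Adj x y ∧ d z y + 1 = d z x)
    (hsep : SepProp G) (B : Set V) (s : ℕ) :
    (psdStep G)^[s] B = {x | ∃ b ∈ B, d b x ≤ s} := by
  induction s with
  | zero =>
    ext x
    simp only [Function.iterate_zero, id_eq, Set.mem_setOf_eq, Nat.le_zero]
    constructor
    · intro h; exact ⟨x, h, (hd0 x x).mpr rfl⟩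
    · rintro ⟨b, hb, hbx⟩; rwa [(hd0 b x).mp hbx] at hb
  | succ s ih =>
    rw [Function.iterate_succ_apply', ih, psdStep_eq G hsep]
    ext x
    simp only [Set.mem_union, Set.mem_setOf_eq]
    constructor
    · rintro (⟨b, hb, hbx⟩ | ⟨v, ⟨b, hb, hbv⟩, hadj⟩)
      · exact ⟨b, hb, hbx.trans (Nat.le_succ s)⟩
      · exact ⟨b, hb, le_trans (hlip x v b hadj.symm) (Nat.add_le_add_right hbv 1)⟩
    · rintro ⟨b, hb, hbx⟩
      rcases Nat.lt_or_ge (d b x) (s + 1) with h | h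
      · exact Or.inl ⟨b, hb, Nat.lt_succ_iff.mp h⟩
      · have hpos : 0 < d b x := by omega
        obtain ⟨y, hadj, hy⟩ := hdesc x b hpos
        exact Or.inr ⟨y, ⟨b, hb, by omega⟩, hadj.symm⟩

lemma psdTh_le_of (B : Finset V) (s : ℕ) (h : (psdStep G)^[s] (↑B) = Set.univ) :
    psdTh G ≤ B.card + s := by
  have hforce : IsPSDForcing G ↑B := ⟨s, h⟩
  have hpt : psdPt G ↑B ≤ s := Nat.sInf_le h
  calc psdTh G ≤ B.card + psdPt G ↑B := Nat.sInf_le ⟨B, hforce, rfl⟩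
  _ ≤ B.card + s := by omega

lemma psdTh_ge_of (m : ℕ)
    (hlb : ∀ B : Finset V, IsPSDForcing G ↑B → m ≤ B.card + psdPt G ↑B)
    (hne : ∃ B : Finset V, IsPSDForcing G ↑B) :
    m ≤ psdTh G := by
  obtain ⟨B, hB⟩ := hne
  refine le_csInf ⟨B.card + psdPt G ↑B, B, hB, rfl⟩ ?_
  rintro k ⟨B, hB, rfl⟩
  exact hlb B hB

lemma pt_spec (B : Set V) (h : IsPSDForcing G B) :
    (psdStep G)^[psdPt G B] B = Set.univ :=
  Nat.sInf_mem h

namespace SpiderAux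

variable {k : ℕ} {l : Fin k → ℕ}

lemma sig_eq {i i' : Fin k} {j : Fin (l i)} {j' : Fin (l i')} :
    (some ⟨i, j⟩ : Option ((i : Fin k) × Fin (l i))) = some ⟨i', j'⟩ ↔
      i = i' ∧ (j : ℕ) = (j' : ℕ) := by
  constructor
  · intro h
    obtain ⟨h1, h2⟩ := Sigma.mk.inj_iff.mp (Option.some.inj h)
    subst h1
    exact ⟨rfl, congrArg Fin.val (eq_of_heq h2)⟩
  · rintro ⟨rfl, h⟩
    exact congrArg some (congrArg _ (Fin.ext h))

def dS : Option ((i : Fin k) × Fin (l i)) → Option ((i : Fin k) × Fin (l i)) → ℕ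
  | none, none => 0
  | none, some ⟨_, j⟩ => (j : ℕ) + 1
  | some ⟨_, j⟩, none => (j : ℕ) + 1
  | some ⟨i, j⟩, some ⟨i', j'⟩ =>
      if i = i' then (j : ℕ) - (j' : ℕ) + ((j' : ℕ) - (j : ℕ)) else (j : ℕ) + (j' : ℕ) + 2

@[simp] lemma dS_none_none : (dS (k := k) (l := l) none none) = 0 := rfl
@[simp] lemma dS_none_some {i : Fin k} {j : Fin (l i)} :
    dS none (some ⟨i, j⟩) = (j : ℕ) + 1 := rfl
@[simp] lemma dS_some_none {i : Fin k} {j : Fin (l i)} :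
    dS (some ⟨i, j⟩) none = (j : ℕ) + 1 := rfl
lemma dS_some_some {i i' : Fin k} {j : Fin (l i)} {j' : Fin (l i')} :
    dS (some ⟨i, j⟩) (some ⟨i', j'⟩) =
      if i = i' then (j : ℕ) - (j' : ℕ) + ((j' : ℕ) - (j : ℕ)) else (j : ℕ) + (j' : ℕ) + 2 := rfl

lemma dS_some_some_same {i : Fin k} {j j' : Fin (l i)} :
    dS (some ⟨i, j⟩) (some ⟨i, j'⟩) = (j : ℕ) - (j' : ℕ) + ((j' : ℕ) - (j : ℕ)) := by
  rw [dS_some_some, if_pos rfl]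

lemma dS_some_some_ne {i i' : Fin k} {j : Fin (l i)} {j' : Fin (l i')} (h : i ≠ i') :
    dS (some ⟨i, j⟩) (some ⟨i', j'⟩) = (j : ℕ) + (j' : ℕ) + 2 := by
  rw [dS_some_some, if_neg h]

lemma hd0 : ∀ x y : Option ((i : Fin k) × Fin (l i)), dS x y = 0 ↔ x = y := by
  rintro (_ | ⟨i, j⟩) (_ | ⟨i', j'⟩)
  · simp
  · simp [dS_none_some]
  · simp [dS_some_none]
  · rw [dS_some_some]
    by_cases h : i = i'
    · subst h
      rw [if_pos rfl, sig_eq]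
      omega
    · rw [if_neg h]
      simp [sig_eq, h]

lemma spider_adj {x y : Option ((i : Fin k) × Fin (l i))} :
    (spider k l).Adj x y ↔ x ≠ y ∧
      ((∃ (i : Fin k) (j : Fin (l i)), (j : ℕ) = 0 ∧ x = none ∧ y = some ⟨i, j⟩) ∨
       (∃ (i : Fin k) (j j' : Fin (l i)), (j' : ℕ) = (j : ℕ) + 1 ∧
          x = some ⟨i, j⟩ ∧ y = some ⟨i, j'⟩) ∨
       (∃ (i : Fin k) (j : Fin (l i)), (j : ℕ) = 0 ∧ y = none ∧ x = some ⟨i, j⟩) ∨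
       (∃ (i : Fin k) (j j' : Fin (l i)), (j' : ℕ) = (j : ℕ) + 1 ∧
          y = some ⟨i, j⟩ ∧ x = some ⟨i, j'⟩)) := by
  rw [spider, SimpleGraph.fromRel_adj]
  constructor
  · rintro ⟨hne, (h | h) | (h | h)⟩
    · exact ⟨hne, Or.inl h⟩
    · exact ⟨hne, Or.inr (Or.inl h)⟩
    · exact ⟨hne, Or.inr (Or.inr (Or.inl h))⟩
    · exact ⟨hne, Or.inr (Or.inr (Or.inr h))⟩
  · rintro ⟨hne, h | h | h | h⟩
    · exact ⟨hne, Or.inl (Or.inl h)⟩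
    · exact ⟨hne, Or.inl (Or.inr h)⟩
    · exact ⟨hne, Or.inr (Or.inl h)⟩
    · exact ⟨hne, Or.inr (Or.inr h)⟩

lemma hlip : ∀ x y z : Option ((i : Fin k) × Fin (l i)),
    (spider k l).Adj x y → dS z x ≤ dS z y + 1 := by
  intro x y z h
  rw [spider_adj] at h
  obtain ⟨-, ⟨i, j, hj, rfl, rfl⟩ | ⟨i, j, j', hj, rfl, rfl⟩ |
      ⟨i, j, hj, rfl, rfl⟩ | ⟨i, j, j', hj, rfl, rfl⟩⟩ := h
  · rcases z with _ | ⟨a, b⟩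
    · simp
    · by_cases hai : a = i
      · subst hai
        rw [dS_some_none, dS_some_some_same]
        omega
      · rw [dS_some_none, dS_some_some_ne hai]
        omega
  · rcases z with _ | ⟨a, b⟩
    · simp; omega
    · by_cases hai : a = i
      · subst hai
        rw [dS_some_some_same, dS_some_some_same]
        omega
      · rw [dS_some_some_ne hai, dS_some_some_ne hai]
        omega
  · rcases z with _ | ⟨a, b⟩
    · simp; omega
    · by_cases hai : a = i
      · subst hai
        rw [dS_some_none, dS_some_some_same]
        omega
      · rw [dS_some_none, dS_some_some_ne hai]
        omega
  · rcases z with _ | ⟨a, b⟩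
    · simp; omega
    · by_cases hai : a = i
      · subst hai
        rw [dS_some_some_same, dS_some_some_same]
        omega
      · rw [dS_some_some_ne hai, dS_some_some_ne hai]
        omega


lemma adj_center_root {i : Fin k} (j : Fin (l i)) (hj : (j : ℕ) = 0) :
    (spider k l).Adj none (some ⟨i, j⟩) := by
  rw [spider_adj]
  exact ⟨by simp, Or.inl ⟨i, j, hj, rfl, rfl⟩⟩

lemma adj_consec {i : Fin k} (j j' : Fin (l i)) (h : (j' : ℕ) = (j : ℕ) + 1) :
    (spider k l).Adj (some ⟨i, j⟩) (some ⟨i, j'⟩) := by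
  rw [spider_adj]
  refine ⟨?_, Or.inr (Or.inl ⟨i, j, j', h, rfl, rfl⟩)⟩
  rw [Ne, sig_eq]
  omega

lemma hdesc : ∀ x z : Option ((i : Fin k) × Fin (l i)), 0 < dS z x →
    ∃ y, (spider k l).Adj x y ∧ dS z y + 1 = dS z x := by
  rintro (_ | ⟨i, j⟩) (_ | ⟨a, b⟩) h
  · simp at h
  · -- x = none, z = some ⟨a,b⟩
    refine ⟨some ⟨a, ⟨0, Nat.lt_of_le_of_lt (Nat.zero_le _) b.isLt⟩⟩,
      adj_center_root _ rfl, ?_⟩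
    rw [dS_some_some_same]
    simp
  · -- x = some ⟨i,j⟩, z = none
    by_cases hj : (j : ℕ) = 0
    · exact ⟨none, (adj_center_root j hj).symm, by simp; omega⟩
    · refine ⟨some ⟨i, ⟨(j : ℕ) - 1, by omega⟩⟩, (adj_consec _ j (by simp; omega)).symm, ?_⟩
      rw [dS_none_some, dS_none_some]
      simp
      omega
  · -- x = some ⟨i,j⟩, z = some ⟨a,b⟩
    by_cases hai : a = i
    · subst hai
      rw [dS_some_some_same] at h ⊢
      rcases Nat.lt_or_ge (j : ℕ) (b : ℕ) with hlt | hge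
      · refine ⟨some ⟨a, ⟨(j : ℕ) + 1, by omega⟩⟩, adj_consec j _ rfl, ?_⟩
        rw [dS_some_some_same]
        simp
        omega
      · have hgt : (b : ℕ) < (j : ℕ) := by omega
        refine ⟨some ⟨a, ⟨(j : ℕ) - 1, by omega⟩⟩, (adj_consec _ j (by simp; omega)).symm, ?_⟩
        rw [dS_some_some_same]
        simp
        omega
    · rw [dS_some_some_ne hai] at h ⊢
      by_cases hj : (j : ℕ) = 0
      · refine ⟨none, (adj_center_root j hj).symm, ?_⟩
        rw [dS_some_none]
        omega
      · refine ⟨some ⟨i, ⟨(j : ℕ) - 1, by omega⟩⟩, (adj_consec _ j (by simp; omega)).symm, ?_⟩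
        rw [dS_some_some_ne hai]
        simp
        omega

def labC : Option ((i : Fin k) × Fin (l i)) → ℕ
  | none => 0
  | some s => (s.1 : ℕ) + 1

def labL (a : Fin k) (b : Fin (l a)) : Option ((i : Fin k) × Fin (l i)) → ℕ
  | none => 0
  | some s => if s.1 = a ∧ (b : ℕ) < (s.2 : ℕ) then 1 else 0

@[simp] lemma labC_none : labC (k := k) (l := l) none = 0 := rfl
@[simp] lemma labC_some {i : Fin k} {j : Fin (l i)} : labC (some ⟨i, j⟩) = (i : ℕ) + 1 := rfl
@[simp] lemma labL_none {a : Fin k} {b : Fin (l a)} : labL a b none = 0 := rfl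
lemma labL_some {a : Fin k} {b : Fin (l a)} {i : Fin k} {j : Fin (l i)} :
    labL a b (some ⟨i, j⟩) = if i = a ∧ (b : ℕ) < (j : ℕ) then 1 else 0 := rfl

lemma nbr_char {a : Fin k} {b : Fin (l a)} {u : Option ((i : Fin k) × Fin (l i))}
    (h : (spider k l).Adj (some ⟨a, b⟩) u) :
    (u = none ∧ (b : ℕ) = 0) ∨
      (∃ j : Fin (l a), u = some ⟨a, j⟩ ∧ ((j : ℕ) + 1 = (b : ℕ) ∨ (j : ℕ) = (b : ℕ) + 1)) := by
  rw [spider_adj] at h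
  obtain ⟨hne, ⟨i, j, hj, hx, hy⟩ | ⟨i, j, j', hj, hx, hy⟩ |
      ⟨i, j, hj, hx, hy⟩ | ⟨i, j, j', hj, hx, hy⟩⟩ := h
  · exact absurd hx (by simp)
  · obtain ⟨rfl, hbj⟩ := sig_eq.mp hx
    exact Or.inr ⟨j', hy, Or.inr (by omega)⟩
  · obtain ⟨rfl, hbj⟩ := sig_eq.mp hy
    exact Or.inl ⟨hx, by omega⟩
  · obtain ⟨rfl, hbj⟩ := sig_eq.mp hy
    exact Or.inr ⟨j, hx, Or.inl (by omega)⟩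

lemma spider_lab : ∀ v : Option ((i : Fin k) × Fin (l i)), ∃ f : Option ((i : Fin k) × Fin (l i)) → ℕ,
    (∀ x y, (spider k l).Adj x y → x ≠ v → y ≠ v → f x = f y) ∧
    (∀ u w, (spider k l).Adj v u → (spider k l).Adj v w → f u = f w → u = w) := by
  rintro (_ | ⟨a, b⟩)
  · -- v = none
    refine ⟨labC, ?_, ?_⟩
    · intro x y hxy hx hy
      rw [spider_adj] at hxy
      obtain ⟨-, ⟨i, j, hj, rfl, rfl⟩ | ⟨i, j, j', hj, rfl, rfl⟩ |
          ⟨i, j, hj, rfl, rfl⟩ | ⟨i, j, j', hj, rfl, rfl⟩⟩ := hxy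
      · exact absurd rfl hx
      · simp
      · exact absurd rfl hy
      · simp
    · intro u w hu hw hf
      rw [spider_adj] at hu hw
      rcases hu.2 with ⟨i, j, hj, -, rfl⟩ | ⟨i, j, j', hj, hx, -⟩ |
          ⟨i, j, hj, -, hx⟩ | ⟨i, j, j', hj, -, hx⟩
      rotate_left
      · exact absurd hx (by simp)
      · exact absurd hx (by simp)
      · exact absurd hx (by simp)
      rcases hw.2 with ⟨i', j'', hj', -, rfl⟩ | ⟨i', j'', j''', hj', hx', -⟩ |
          ⟨i', j'', hj', -, hx'⟩ | ⟨i', j'', j''', hj', -, hx'⟩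
      rotate_left
      · exact absurd hx' (by simp)
      · exact absurd hx' (by simp)
      · exact absurd hx' (by simp)
      simp only [labC_some] at hf
      have hii : i = i' := Fin.ext (by omega)
      subst hii
      rw [sig_eq]
      omega
  · -- v = some ⟨a, b⟩
    refine ⟨labL a b, ?_, ?_⟩
    · intro x y hxy hx hy
      rw [spider_adj] at hxy
      obtain ⟨-, ⟨i, j, hj, rfl, rfl⟩ | ⟨i, j, j', hj, rfl, rfl⟩ |
          ⟨i, j, hj, rfl, rfl⟩ | ⟨i, j, j', hj, rfl, rfl⟩⟩ := hxy
      · rw [labL_none, labL_some]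
        split_ifs with hc
        · omega
        · rfl
      · rw [labL_some, labL_some]
        by_cases hia : i = a
        · subst hia
          have h1 : (j : ℕ) ≠ (b : ℕ) := fun hc => hx (sig_eq.mpr ⟨rfl, hc⟩)
          have h2 : (j' : ℕ) ≠ (b : ℕ) := fun hc => hy (sig_eq.mpr ⟨rfl, hc⟩)
          split_ifs with hc1 hc2 hc2 <;> first | rfl | omega
        · rw [if_neg (fun hc => hia hc.1), if_neg (fun hc => hia hc.1)]
      · rw [labL_none, labL_some]
        split_ifs with hc
        · omega
        · rfl
      · rw [labL_some, labL_some]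
        by_cases hia : i = a
        · subst hia
          have h1 : (j : ℕ) ≠ (b : ℕ) := fun hc => hy (sig_eq.mpr ⟨rfl, hc⟩)
          have h2 : (j' : ℕ) ≠ (b : ℕ) := fun hc => hx (sig_eq.mpr ⟨rfl, hc⟩)
          split_ifs with hc1 hc2 hc2 <;> first | rfl | omega
        · rw [if_neg (fun hc => hia hc.1), if_neg (fun hc => hia hc.1)]
    · intro u w hu hw hf
      rcases nbr_char hu with ⟨rfl, hb⟩ | ⟨j, rfl, hj⟩ <;>
        rcases nbr_char hw with ⟨rfl, hb'⟩ | ⟨j', rfl, hj'⟩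
      · rfl
      · exfalso
        rw [labL_none, labL_some] at hf
        split_ifs at hf <;> omega
      · exfalso
        rw [labL_none, labL_some] at hf
        split_ifs at hf <;> omega
      · rw [labL_some, labL_some] at hf
        rw [sig_eq]
        refine ⟨rfl, ?_⟩
        split_ifs at hf <;> omega

end SpiderAux

section SpiderComb
open SpiderAux

variable {t : ℕ}

abbrev SpV (t : ℕ) := Option ((i : Fin (t - 1)) × Fin (t - (i : ℕ)))

lemma sig_eq' {i i' : Fin (t - 1)} {j : Fin (t - (i : ℕ))} {j' : Fin (t - (i' : ℕ))} :
    (some ⟨i, j⟩ : SpV t) = some ⟨i', j'⟩ ↔ i = i' ∧ (j : ℕ) = (j' : ℕ) :=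
  sig_eq (k := t - 1) (l := fun i => t - (i : ℕ))

lemma spider_cover_lb (ht : 4 ≤ t) (B : Finset (SpV t)) (p : ℕ)
    (hcov : ∀ x : SpV t, ∃ b ∈ B, dS b x ≤ p) : t + 1 ≤ B.card + p := by
  by_contra hcon
  push_neg at hcon
  have hBP : B.card + p ≤ t := by omega
  have hBne : ∃ b, b ∈ B := by
    obtain ⟨b, hb, -⟩ := hcov none
    exact ⟨b, hb⟩
  have hBpos : 0 < B.card := Finset.card_pos.mpr hBne
  have hi0 : (0 : ℕ) < t - 1 := by omega
  rcases Nat.eq_zero_or_pos p with rfl | hp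
  · -- p = 0
    have hall : ∀ x : SpV t, x ∈ B := by
      intro x
      obtain ⟨b, hb, hd⟩ := hcov x
      rwa [Nat.le_zero.mp hd |> (hd0 b x).mp] at hb
    have : (Finset.range (t + 1)).card ≤ B.card := by
      refine Finset.card_le_card_of_injOn
        (fun m => if h : m < t then
          some ⟨⟨0, hi0⟩, ⟨m, by simp only [Fin.val_mk]; omega⟩⟩ else none) ?_ ?_
      · intro m _
        dsimp only
        split_ifs <;> exact hall _
      · intro m hm m' hm' hmm
        simp only [Finset.mem_coe, Finset.mem_range] at hm hm'
        dsimp only at hmm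
        by_cases h1 : m < t <;> by_cases h2 : m' < t
        · rw [dif_pos h1, dif_pos h2] at hmm
          simpa using (sig_eq'.mp hmm).2
        · rw [dif_pos h1, dif_neg h2] at hmm
          exact absurd hmm (by simp)
        · rw [dif_neg h1, dif_pos h2] at hmm
          exact absurd hmm (by simp)
        · omega
    simp at this
    omega
  -- p ≥ 1
  have hpt : p ≤ t - 1 := by omega
  have tip_blue : ∀ i : Fin (t - 1), (i : ℕ) + p < t →
      ∃ j : Fin (t - (i : ℕ)), some ⟨i, j⟩ ∈ B := by
    intro i hip
    have hilt := i.isLt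
    obtain ⟨b, hb, hd⟩ := hcov (some ⟨i, ⟨t - 1 - (i : ℕ), by omega⟩⟩)
    rcases b with _ | ⟨a, c⟩
    · rw [dS_none_some] at hd
      simp only [Fin.val_mk] at hd
      omega
    · by_cases hai : a = i
      · subst hai
        exact ⟨c, hb⟩
      · rw [dS_some_some_ne hai] at hd
        simp only [Fin.val_mk] at hd
        omega
  set T : Finset (Fin (t - 1)) := Finset.univ.filter (fun i => (i : ℕ) + p < t) with hT
  have hTmem : ∀ i : Fin (t - 1), i ∈ T ↔ (i : ℕ) + p < t := by
    intro i; simp [hT]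
  set g : Fin (t - 1) → SpV t := fun i =>
    if h : (i : ℕ) + p < t then some ⟨i, (tip_blue i h).choose⟩ else none with hg
  have hgB : ∀ i ∈ T, g i ∈ B := by
    intro i hi
    rw [hTmem] at hi
    rw [hg]
    simp only [dif_pos hi]
    exact (tip_blue i hi).choose_spec
  have hginj : Set.InjOn g ↑T := by
    intro i hi i' hi' hii
    simp only [Finset.mem_coe] at hi hi'
    rw [hTmem] at hi hi'
    rw [hg] at hii
    simp only [dif_pos hi, dif_pos hi'] at hii
    exact (sig_eq'.mp hii).1
  have hTcard : t - p ≤ T.card := by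
    refine le_trans (le_of_eq (Finset.card_range (t - p)).symm)
      (Finset.card_le_card_of_injOn
        (fun m => (⟨m % (t - 1), Nat.mod_lt _ (by omega)⟩ : Fin (t - 1))) ?_ ?_)
    · intro m hm
      rw [Finset.mem_coe, Finset.mem_range] at hm
      rw [Finset.mem_coe, hTmem]
      simp only [Fin.val_mk]
      have : m % (t - 1) = m := Nat.mod_eq_of_lt (by omega)
      omega
    · intro m hm m' hm' hmm
      simp only [Finset.mem_coe, Finset.mem_range] at hm hm'
      have h1 : m % (t - 1) = m := Nat.mod_eq_of_lt (by omega)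
      have h2 : m' % (t - 1) = m' := Nat.mod_eq_of_lt (by omega)
      simp only [Fin.mk.injEq] at hmm
      omega
  have hcardle : T.card ≤ B.card := Finset.card_le_card_of_injOn g hgB hginj
  have himg : T.image g = B := by
    apply Finset.eq_of_subset_of_card_le
    · intro b hb
      obtain ⟨i, hi, rfl⟩ := Finset.mem_image.mp hb
      exact hgB i hi
    · rw [Finset.card_image_of_injOn hginj]
      omega
  have hblues : ∀ b ∈ B, ∃ i : Fin (t - 1), ∃ hip : (i : ℕ) + p < t,
      b = some ⟨i, (tip_blue i hip).choose⟩ := by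
    intro b hb
    rw [← himg] at hb
    obtain ⟨i, hi, rfl⟩ := Finset.mem_image.mp hb
    rw [hTmem] at hi
    exact ⟨i, hi, by rw [hg]; simp only [dif_pos hi]⟩
  rcases Nat.lt_or_ge 1 p with hp2 | hp1
  · -- p ≥ 2 : the tip of the leg of order p is uncovered
    have hleg : t - p < t - 1 := by omega
    obtain ⟨b, hb, hd⟩ := hcov (some ⟨⟨t - p, hleg⟩, ⟨p - 1, by simp only [Fin.val_mk]; omega⟩⟩)
    obtain ⟨i, hip, rfl⟩ := hblues b hb
    have hine : i ≠ ⟨t - p, hleg⟩ := by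
      intro h
      rw [Fin.ext_iff] at h
      simp only [Fin.val_mk] at h
      omega
    rw [dS_some_some_ne hine] at hd
    simp only [Fin.val_mk] at hd
    omega
  · -- p = 1
    have hp1' : p = 1 := by omega
    subst hp1'
    obtain ⟨b, hb, hd⟩ := hcov (some ⟨⟨0, hi0⟩, ⟨t - 1, by simp only [Fin.val_mk]; omega⟩⟩)
    obtain ⟨a, hap, rfl⟩ := hblues b hb
    by_cases ha0 : a = ⟨0, hi0⟩
    · subst ha0
      rw [dS_some_some_same] at hd
      simp only [Fin.val_mk] at hd
      have hclt : ((tip_blue ⟨0, hi0⟩ hap).choose : ℕ) < t := by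
        have := (tip_blue ⟨0, hi0⟩ hap).choose.isLt
        simpa using this
      have hcval : t - 2 ≤ ((tip_blue ⟨0, hi0⟩ hap).choose : ℕ) := by omega
      obtain ⟨b', hb', hd'⟩ := hcov (some ⟨⟨0, hi0⟩,
        ⟨((tip_blue ⟨0, hi0⟩ hap).choose : ℕ) - 2, by simp only [Fin.val_mk]; omega⟩⟩)
      obtain ⟨a', hap', rfl⟩ := hblues b' hb'
      by_cases ha0' : a' = ⟨0, hi0⟩
      · subst ha0'
        rw [dS_some_some_same] at hd'
        simp only [Fin.val_mk] at hd'
        have huniq : ((tip_blue ⟨0, hi0⟩ hap').choose : ℕ) =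
            ((tip_blue ⟨0, hi0⟩ hap).choose : ℕ) := by
          have e1 : g ⟨0, hi0⟩ = some ⟨⟨0, hi0⟩, (tip_blue ⟨0, hi0⟩ hap).choose⟩ := by
            rw [hg]; simp only [dif_pos hap]
          have e2 : g ⟨0, hi0⟩ = some ⟨⟨0, hi0⟩, (tip_blue ⟨0, hi0⟩ hap').choose⟩ := by
            rw [hg]; simp only [dif_pos hap']
          exact ((sig_eq'.mp (e1.symm.trans e2)).2).symm
        rw [huniq] at hd'
        omega
      · rw [dS_some_some_ne ha0'] at hd'
        simp only [Fin.val_mk] at hd'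
        omega
    · rw [dS_some_some_ne ha0] at hd
      simp only [Fin.val_mk] at hd
      omega

lemma spider_ub (ht : 4 ≤ t) : ∃ B : Finset (SpV t), B.card = 2 ∧
    ∀ x : SpV t, ∃ b ∈ B, dS b x ≤ t - 1 := by
  have hi0 : (0 : ℕ) < t - 1 := by omega
  have htip : t - 1 < t - ((⟨0, hi0⟩ : Fin (t - 1)) : ℕ) := by
    simp only [Fin.val_mk]; omega
  refine ⟨{none, some ⟨⟨0, hi0⟩, ⟨t - 1, htip⟩⟩}, ?_, ?_⟩
  · rw [Finset.card_insert_of_notMem (by simp), Finset.card_singleton]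
  · rintro (_ | ⟨i, j⟩)
    · exact ⟨none, by simp, by simp⟩
    · by_cases hI : i = ⟨0, hi0⟩
      · subst hI
        refine ⟨some ⟨⟨0, hi0⟩, ⟨t - 1, htip⟩⟩, by simp, ?_⟩
        rw [dS_some_some_same]
        have := j.isLt
        simp only [Fin.val_mk] at this ⊢
        omega
      · refine ⟨none, by simp, ?_⟩
        rw [dS_none_some]
        have h1 := j.isLt
        have h2 := i.isLt
        have hI' : (i : ℕ) ≠ 0 := fun h => hI (Fin.ext (by simp [h]))
        omega

end SpiderComb

namespace PathAux
variable {n : ℕ}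

def dP (x y : Fin n) : ℕ := ((x : ℕ) - y) + ((y : ℕ) - x)

lemma dP_hd0 : ∀ x y : Fin n, dP x y = 0 ↔ x = y := by
  intro x y; unfold dP; rw [Fin.ext_iff]; omega

lemma dP_lip : ∀ x y z : Fin n, (pathGraph n).Adj x y → dP z x ≤ dP z y + 1 := by
  intro x y z h
  rw [pathGraph_adj] at h
  unfold dP; omega

lemma dP_desc : ∀ x z : Fin n, 0 < dP z x →
    ∃ y, (pathGraph n).Adj x y ∧ dP z y + 1 = dP z x := by
  intro x z h
  unfold dP at h ⊢
  rcases Nat.lt_or_ge (x : ℕ) (z : ℕ) with hlt | hge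
  · refine ⟨⟨(x : ℕ) + 1, by have := z.isLt; omega⟩, ?_, ?_⟩
    · rw [pathGraph_adj]; left; simp
    · simp only [Fin.val_mk]; omega
  · have hgt : (z : ℕ) < (x : ℕ) := by omega
    refine ⟨⟨(x : ℕ) - 1, by have := x.isLt; omega⟩, ?_, ?_⟩
    · rw [pathGraph_adj]; right; simp only [Fin.val_mk]; omega
    · simp only [Fin.val_mk]; omega

lemma path_lab : ∀ v : Fin n, ∃ f : Fin n → ℕ,
    (∀ x y, (pathGraph n).Adj x y → x ≠ v → y ≠ v → f x = f y) ∧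
    (∀ u w, (pathGraph n).Adj v u → (pathGraph n).Adj v w → f u = f w → u = w) := by
  intro v
  refine ⟨fun x => if (x : ℕ) < (v : ℕ) then 0 else 1, ?_, ?_⟩
  · intro x y hxy hx hy
    rw [pathGraph_adj] at hxy
    have hx' : (x : ℕ) ≠ v := fun h => hx (Fin.ext h)
    have hy' : (y : ℕ) ≠ v := fun h => hy (Fin.ext h)
    dsimp only
    split_ifs <;> first | rfl | omega
  · intro u w hu hw hf
    rw [pathGraph_adj] at hu hw
    dsimp only at hf
    apply Fin.ext
    split_ifs at hf <;> omega

lemma path_card_ball (b : Fin n) (p : ℕ) :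
    (Finset.univ.filter (fun x : Fin n => dP b x ≤ p)).card ≤ 2 * p + 1 := by
  have := Finset.card_le_card_of_injOn (fun x : Fin n => (x : ℕ) + p - b)
    (s := Finset.univ.filter (fun x : Fin n => dP b x ≤ p)) (t := Finset.range (2 * p + 1))
    ?_ ?_
  · rwa [Finset.card_range] at this
  · intro x hx
    rw [Finset.mem_coe, Finset.mem_filter] at hx
    rw [Finset.mem_coe, Finset.mem_range]
    have h1 : dP b x ≤ p := hx.2
    unfold dP at h1
    show (x : ℕ) + p - (b : ℕ) < 2 * p + 1
    omega
  · intro x hx y hy hxy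
    rw [Finset.mem_coe, Finset.mem_filter] at hx hy
    have h1 : dP b x ≤ p := hx.2
    have h2 : dP b y ≤ p := hy.2
    unfold dP at h1 h2
    have hxy' : (x : ℕ) + p - (b : ℕ) = (y : ℕ) + p - (b : ℕ) := hxy
    apply Fin.ext
    omega

end PathAux

section PathComb
open PathAux
variable {t : ℕ}

lemma path_lb (ht : 4 ≤ t) {n : ℕ} (h2n : 2 * n = t * (t + 1)) (B : Finset (Fin n)) (p : ℕ)
    (hcov : ∀ x, ∃ b ∈ B, dP b x ≤ p) : t ≤ B.card + p := by
  have hcount : n ≤ B.card * (2 * p + 1) := by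
    have h1 : (Finset.univ : Finset (Fin n)) ⊆
        B.biUnion (fun b => Finset.univ.filter (fun x => dP b x ≤ p)) := by
      intro x _
      obtain ⟨b, hb, hd⟩ := hcov x
      exact Finset.mem_biUnion.mpr ⟨b, hb, Finset.mem_filter.mpr ⟨Finset.mem_univ _, hd⟩⟩
    calc n = (Finset.univ : Finset (Fin n)).card := by simp
    _ ≤ _ := Finset.card_le_card h1
    _ ≤ ∑ b ∈ B, (Finset.univ.filter (fun x => dP b x ≤ p)).card := Finset.card_biUnion_le
    _ ≤ ∑ _b ∈ B, (2 * p + 1) := Finset.sum_le_sum (fun b _ => path_card_ball b p)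
    _ = B.card * (2 * p + 1) := by rw [Finset.sum_const, smul_eq_mul]
  by_contra hcon
  push_neg at hcon
  have hn2 : 2 * n = t * (t + 1) := h2n
  have hc : (n : ℤ) ≤ (B.card : ℤ) * (2 * p + 1) := by exact_mod_cast hcount
  have hb' : (B.card : ℤ) ≤ (t : ℤ) - 1 - p := by
    have : B.card + p + 1 ≤ t := hcon
    push_cast
    omega
  have hn' : 2 * (n : ℤ) = (t : ℤ) * (t + 1) := by exact_mod_cast hn2
  have hp' : (0 : ℤ) ≤ (p : ℤ) := Int.natCast_nonneg p
  have hmul : (B.card : ℤ) * (2 * p + 1) ≤ ((t : ℤ) - 1 - p) * (2 * p + 1) :=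
    mul_le_mul_of_nonneg_right hb' (by positivity)
  nlinarith [sq_nonneg ((t : ℤ) - 2 * p), sq_nonneg ((t : ℤ) - 2 * p - 1)]

lemma path_ub (ht : 4 ≤ t) {n : ℕ} (h2n : 2 * n = t * (t + 1)) :
    ∃ B : Finset (Fin n), B.card ≤ (t + 1) / 2 ∧
    ∀ x, ∃ b ∈ B, dP b x ≤ t / 2 := by
  set b₀ := (t + 1) / 2 with hb₀
  set p₀ := t / 2 with hp₀
  have hq : 0 < 2 * p₀ + 1 := by omega
  have hnb : n = (2 * p₀ + 1) * b₀ := by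
    rcases Nat.even_or_odd t with ⟨m, hm⟩ | ⟨m, hm⟩
    · have hb : b₀ = m := by omega
      have hp : p₀ = m := by omega
      have h3 : t * (t + 1) = 2 * (m * (t + 1)) := by rw [hm]; ring
      have h2 : n = m * (t + 1) := by omega
      rw [h2, hb, hp]
      have h4 : t + 1 = 2 * m + 1 := by omega
      rw [h4]; ring
    · have hb : b₀ = m + 1 := by omega
      have hp : p₀ = m := by omega
      have h3 : t * (t + 1) = 2 * ((m + 1) * (2 * m + 1)) := by rw [hm]; ring
      have h2 : n = (m + 1) * (2 * m + 1) := by omega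
      rw [h2, hb, hp]; ring
  have hb0pos : 0 < b₀ := by omega
  have hn0 : 0 < n := by rw [hnb]; exact Nat.mul_pos hq hb0pos
  refine ⟨(Finset.range b₀).image
      (fun a => (⟨min (p₀ + (2 * p₀ + 1) * a) (n - 1), by omega⟩ : Fin n)), ?_, ?_⟩
  · exact le_trans Finset.card_image_le (le_of_eq (Finset.card_range b₀))
  · intro x
    have hx := x.isLt
    set m := (x : ℕ) / (2 * p₀ + 1) with hm
    have hmlt : m < b₀ := by
      rw [hm, Nat.div_lt_iff_lt_mul hq]
      calc (x : ℕ) < n := hx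
      _ = b₀ * (2 * p₀ + 1) := by rw [hnb]; ring
    have hdm : (2 * p₀ + 1) * m + (x : ℕ) % (2 * p₀ + 1) = (x : ℕ) := Nat.div_add_mod _ _
    have hmod : (x : ℕ) % (2 * p₀ + 1) < 2 * p₀ + 1 := Nat.mod_lt _ hq
    have hble : (2 * p₀ + 1) * m ≤ (2 * p₀ + 1) * (b₀ - 1) :=
      Nat.mul_le_mul_left _ (by omega)
    have hbexp : (2 * p₀ + 1) * (b₀ - 1) + (2 * p₀ + 1) = (2 * p₀ + 1) * b₀ := by
      have h5 : b₀ - 1 + 1 = b₀ := by omega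
      calc (2 * p₀ + 1) * (b₀ - 1) + (2 * p₀ + 1) = (2 * p₀ + 1) * (b₀ - 1 + 1) := by ring
      _ = (2 * p₀ + 1) * b₀ := by rw [h5]
    refine ⟨_, Finset.mem_image.mpr ⟨m, Finset.mem_range.mpr hmlt, rfl⟩, ?_⟩
    unfold dP
    simp only [Fin.val_mk]
    omega

end PathComb

theorem stmt13 (t : ℕ) (ht : 4 ≤ t) :
    psdTh (spider (t - 1) (fun i => t - (i : ℕ))) = t + 1 ∧
    t + 1 = 1 + psdTh (SimpleGraph.pathGraph (t * (t + 1) / 2)) := by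
  have hsepS : SepProp (spider (t - 1) (fun i => t - (i : ℕ))) :=
    sepProp_of_lab _ SpiderAux.spider_lab
  have hsepP : SepProp (SimpleGraph.pathGraph (t * (t + 1) / 2)) :=
    sepProp_of_lab _ PathAux.path_lab
  have hspider : psdTh (spider (t - 1) (fun i => t - (i : ℕ))) = t + 1 := by
    obtain ⟨B₀, hcard, hcov⟩ := spider_ub (t := t) ht
    have huniv : (psdStep (spider (t - 1) (fun i => t - (i : ℕ))))^[t - 1] ↑B₀ = Set.univ := by
      rw [iterate_eq_ball _ SpiderAux.dS SpiderAux.hd0 SpiderAux.hlip SpiderAux.hdesc hsepS]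
      ext x
      simp only [Set.mem_setOf_eq, Set.mem_univ, iff_true]
      obtain ⟨b, hb, hd⟩ := hcov x
      exact ⟨b, hb, hd⟩
    apply le_antisymm
    · have := psdTh_le_of _ B₀ (t - 1) huniv
      omega
    · refine psdTh_ge_of _ (t + 1) ?_ ⟨B₀, ⟨t - 1, huniv⟩⟩
      intro B hB
      have hU := pt_spec _ _ hB
      rw [iterate_eq_ball _ SpiderAux.dS SpiderAux.hd0 SpiderAux.hlip SpiderAux.hdesc hsepS] at hU
      refine spider_cover_lb ht B _ ?_
      intro x
      have hx : x ∈ {y | ∃ b ∈ (↑B : Set _), SpiderAux.dS b y ≤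
          psdPt (spider (t - 1) (fun i => t - (i : ℕ))) ↑B} := by
        rw [hU]; exact Set.mem_univ x
      simpa using hx
  have hpath : psdTh (SimpleGraph.pathGraph (t * (t + 1) / 2)) = t := by
    have h2n : 2 * (t * (t + 1) / 2) = t * (t + 1) := by
      have : 2 ∣ t * (t + 1) := (Nat.even_mul_succ_self t).two_dvd
      omega
    obtain ⟨B₀, hcard, hcov⟩ := path_ub (t := t) ht h2n
    have huniv : (psdStep (SimpleGraph.pathGraph (t * (t + 1) / 2)))^[t / 2] ↑B₀ = Set.univ := by
      rw [iterate_eq_ball _ PathAux.dP PathAux.dP_hd0 PathAux.dP_lip PathAux.dP_desc hsepP]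
      ext x
      simp only [Set.mem_setOf_eq, Set.mem_univ, iff_true]
      obtain ⟨b, hb, hd⟩ := hcov x
      exact ⟨b, hb, hd⟩
    apply le_antisymm
    · have := psdTh_le_of _ B₀ (t / 2) huniv
      omega
    · refine psdTh_ge_of _ t ?_ ⟨B₀, ⟨t / 2, huniv⟩⟩
      intro B hB
      have hU := pt_spec _ _ hB
      rw [iterate_eq_ball _ PathAux.dP PathAux.dP_hd0 PathAux.dP_lip PathAux.dP_desc hsepP] at hU
      refine path_lb ht h2n B _ ?_
      intro x
      have hx : x ∈ {y | ∃ b ∈ (↑B : Set _), PathAux.dP b y ≤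
          psdPt (SimpleGraph.pathGraph (t * (t + 1) / 2)) ↑B} := by
        rw [hU]; exact Set.mem_univ x
      simpa using hx
  exact ⟨hspider, by omega⟩
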